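/- Let k be a field and D a division ring which is a k-algebra (with k mapping into the center of D) and which is finite-dimensional as a k-vector space. Then the ring k((t)) ⊗_k D is a division ring, where k((t)) denotes the field of formal Laurent series over k. -/

import Mathlib

open TensorProduct

/- We deactivate the coefficientwise module instance on Hahn series locally, so that the
`k`-module structure on `k((t)) = LaurentSeries k` used to form the tensor product
`k((t)) ⊗[k] D` is the canonical one coming from the `k`-algebra structure (the two are
mathematically the same scalar multiplication). -/
attribute [-instance] HahnSeries.instModule

section Aux

variable (k D : Type) [Field k] [DivisionRing D] [Algebra k D]

/-- With the coefficientwise module instance removed, instance search for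
`IsScalarTower k k A` can loop; we provide it directly for the `Algebra`-induced
scalar actions. -/
instance instTowerKKA (A : Type) [Semiring A] [Algebra k A] :
    @IsScalarTower k k A Algebra.toSMul Algebra.toSMul Algebra.toSMul :=
  @IsScalarTower.mk _ _ _ _ _ _ (fun r s x => by
    simp only [Algebra.smul_def, map_mul, mul_assoc, Algebra.algebraMap_self_apply])

/-- The coefficientwise map `k((t)) → D((t))` as a `k`-algebra hom. -/
noncomputable def laurentCoeffAlgHom : LaurentSeries k →ₐ[k] LaurentSeries D where
  toFun x := x.map (algebraMap k D)
  map_one' := HahnSeries.map_one (algebraMap k D).toMonoidWithZeroHom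
  map_mul' x y := HahnSeries.map_mul (algebraMap k D : k →ₙ+* D)
  map_zero' := by ext g; simp
  map_add' x y := HahnSeries.map_add (algebraMap k D : k →+ D)
  commutes' r := by
    ext g
    simp only [HahnSeries.algebraMap_apply', PowerSeries.algebraMap_apply,
      Algebra.algebraMap_self_apply, HahnSeries.ofPowerSeries_C, HahnSeries.map_coeff,
      HahnSeries.algebraMap_apply, HahnSeries.C_apply, HahnSeries.coeff_single, apply_ite,
      map_zero]
    split <;> simp_all

@[simp] lemma laurentCoeffAlgHom_coeff (x : LaurentSeries k) (g : ℤ) :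
    (laurentCoeffAlgHom k D x).coeff g = algebraMap k D (x.coeff g) := rfl

/-- `HahnSeries.C : D → D((t))` as a `k`-algebra hom. -/
noncomputable def laurentCAlgHom : D →ₐ[k] LaurentSeries D where
  toRingHom := HahnSeries.C
  commutes' r := rfl

@[simp] lemma laurentCAlgHom_apply (d : D) :
    laurentCAlgHom k D d = HahnSeries.C d := rfl

/-- The natural `k`-algebra hom `k((t)) ⊗[k] D → D((t))`. -/
noncomputable def laurentTensorHom : LaurentSeries k ⊗[k] D →ₐ[k] LaurentSeries D :=
  Algebra.TensorProduct.lift (laurentCoeffAlgHom k D) (laurentCAlgHom k D) (by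
    intro x d
    rw [commute_iff_eq]
    ext g
    rw [laurentCAlgHom_apply, HahnSeries.C_apply, HahnSeries.coeff_mul_single_zero (a := g),
      HahnSeries.coeff_single_zero_mul (a := g), laurentCoeffAlgHom_coeff]
    exact Algebra.commutes (x.coeff g) d)

lemma laurentTensorHom_tmul (x : LaurentSeries k) (d : D) :
    laurentTensorHom k D (x ⊗ₜ d) = x.map (algebraMap k D) * HahnSeries.C d := by
  rw [laurentTensorHom, Algebra.TensorProduct.lift_tmul]
  rfl

lemma laurentTensorHom_injective [FiniteDimensional k D] :
    Function.Injective (laurentTensorHom k D) := by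
  classical
  rw [injective_iff_map_eq_zero]
  intro x hx
  let b := Module.finBasis k D
  let B := Algebra.TensorProduct.basis (LaurentSeries k) b
  have hxB : x = ∑ i, B.repr x i • B i := (B.sum_repr x).symm
  rw [hxB] at hx
  have hφ : ∀ (i), laurentTensorHom k D (B.repr x i • B i)
      = (B.repr x i).map (algebraMap k D) * HahnSeries.C (b i) := by
    intro i
    rw [show (B.repr x i • B i : LaurentSeries k ⊗[k] D) = B.repr x i ⊗ₜ b i from by
      rw [show (B i : LaurentSeries k ⊗[k] D)
            = Algebra.TensorProduct.basis (LaurentSeries k) b i from rfl]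
      exact Algebra.TensorProduct.basis_repr_symm_apply' b (B.repr x i) i]
    exact laurentTensorHom_tmul k D _ _
  rw [map_sum] at hx
  simp only [hφ] at hx
  have hcoeff : ∀ i, B.repr x i = 0 := by
    intro i
    ext g
    simp only [HahnSeries.coeff_zero]
    have h0 : ∑ j, ((B.repr x j).map (algebraMap k D) * HahnSeries.C (b j)).coeff g = 0 := by
      have h1 : ∑ j, ((B.repr x j).map (algebraMap k D) * HahnSeries.C (b j)).coeff g
          = (∑ j, (B.repr x j).map (algebraMap k D) * HahnSeries.C (b j)).coeff g :=
        (map_sum (HahnSeries.coeff.addMonoidHom g)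
          (fun j => (B.repr x j).map (algebraMap k D) * HahnSeries.C (b j)) Finset.univ).symm
      rw [h1, hx, HahnSeries.coeff_zero]
    have hsum : ∑ j, ((B.repr x j).coeff g) • (b j) = 0 := by
      rw [← h0]
      refine Finset.sum_congr rfl fun j _ => ?_
      rw [HahnSeries.C_apply, HahnSeries.coeff_mul_single_zero, HahnSeries.map_coeff,
        Algebra.smul_def]
    exact Fintype.linearIndependent_iff.mp b.linearIndependent _ hsum i
  rw [hxB]
  exact Finset.sum_eq_zero fun i _ => by
    rw [hcoeff i]; exact zero_smul (LaurentSeries k) (B i)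

end Aux

set_option maxHeartbeats 1000000 in
/-- Let `k` be a field and `D` a division ring which is a `k`-algebra
(so `k` maps into the center of `D`) and which is finite-dimensional as a `k`-vector
space. Then the ring `k((t)) ⊗[k] D` is a division ring: it is nontrivial and every
nonzero element is a unit. Here `k((t))` is the field of formal Laurent series over `k`. -/
theorem laurentSeries_tensor_divisionRing (k D : Type) [Field k] [DivisionRing D]
    [Algebra k D] [FiniteDimensional k D] :
    Nontrivial (LaurentSeries k ⊗[k] D) ∧
      ∀ x : LaurentSeries k ⊗[k] D, x ≠ 0 → IsUnit x := by
  classical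
  have hinj := laurentTensorHom_injective k D
  have hnt : Nontrivial (LaurentSeries k ⊗[k] D) := by
    refine ⟨1, 0, fun h => ?_⟩
    have := congrArg (laurentTensorHom k D) h
    rw [map_one, map_zero] at this
    exact one_ne_zero this
  have hnzd : NoZeroDivisors (LaurentSeries k ⊗[k] D) := by
    constructor
    intro a b hab
    have : laurentTensorHom k D a * laurentTensorHom k D b = 0 := by
      rw [← map_mul, hab, map_zero]
    rcases mul_eq_zero.mp this with h | h
    · exact Or.inl (hinj (by rw [h, map_zero]))
    · exact Or.inr (hinj (by rw [h, map_zero]))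
  haveI := hnt
  haveI := hnzd
  haveI : IsDomain (LaurentSeries k ⊗[k] D) := NoZeroDivisors.to_isDomain _
  haveI : FiniteDimensional (LaurentSeries k) (LaurentSeries k ⊗[k] D) :=
    Module.Finite.of_basis (Algebra.TensorProduct.basis (LaurentSeries k) (Module.finBasis k D))
  exact ⟨hnt, fun x hx => FiniteDimensional.isUnit (LaurentSeries k) (K := LaurentSeries k ⊗[k] D) hx⟩
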